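/- Let (λ, μ) ∈ Host_n. Let C_{λ,μ} be the set of corners (μ'_a, a) of μ such that μ'_a = λ'_a and μ'_{a+1} < λ'_{a+1}, and let J_{λ,μ} be the set of second coordinates of elements of C_{λ,μ}. Then the map a ↦ λ_1 − a is a bijection from J_{λ,μ} to J_{λ̃,μ̃} (where (λ̃, μ̃) is the jigsaw dual pair), and for each a ∈ J_{λ,μ} one has μ'_a − μ'_{a+1} = μ̃'_{λ_1−a} − μ̃'_{λ_1−a+1}. -/

import Mathlib

/-- The `k`-th part of the conjugate of a partition given by parts `f 1, …, f n`. -/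
def conjPart (n : ℕ) (f : ℕ → ℕ) (k : ℕ) : ℕ :=
  ((Finset.Icc 1 n).filter (fun i => k ≤ f i)).card

/-- `λ − μ` is a horizontal strip (at most one cell in each column). -/
def IsHorizontalStrip (n : ℕ) (lam mu : ℕ → ℕ) : Prop :=
  ∀ k, 1 ≤ k → conjPart n lam k ≤ conjPart n mu k + 1

/-- `J_{λ,μ}`: the set of column indices `a ≥ 1` such that `(μ'_a, a)` is a corner
of `μ` with `μ'_a = λ'_a` and `μ'_{a+1} < λ'_{a+1}`. -/
def Jset (n : ℕ) (lam mu : ℕ → ℕ) : Set ℕ :=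
  {a | 1 ≤ a ∧ conjPart n mu a = conjPart n lam a ∧
    conjPart n mu (a + 1) < conjPart n lam (a + 1)}

lemma anti_le_first (f : ℕ → ℕ) (hf : ∀ i, 1 ≤ i → f (i + 1) ≤ f i) :
    ∀ j, 1 ≤ j → f j ≤ f 1 := by
  intro j
  induction j with
  | zero => intro h; omega
  | succ m ih =>
    intro _
    rcases Nat.eq_zero_or_pos m with h0 | h1
    · subst h0; exact le_refl _
    · exact (hf m h1).trans (ih h1)

lemma conjPart_mono (n : ℕ) (f g : ℕ → ℕ) (h : ∀ i, 1 ≤ i → f i ≤ g i) (k : ℕ) :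
    conjPart n f k ≤ conjPart n g k := by
  apply Finset.card_le_card
  intro i hi
  simp only [Finset.mem_filter, Finset.mem_Icc] at hi ⊢
  exact ⟨hi.1, hi.2.trans (h i hi.1.1)⟩

lemma conjPart_pos_exists {n k : ℕ} {f : ℕ → ℕ} (h : 0 < conjPart n f k) :
    ∃ i, 1 ≤ i ∧ i ≤ n ∧ k ≤ f i := by
  obtain ⟨i, hi⟩ := Finset.card_pos.mp h
  simp only [Finset.mem_filter, Finset.mem_Icc] at hi
  exact ⟨i, hi.1.1, hi.1.2, hi.2⟩

/-- reflection `i ↦ m + 1 - i` on `Icc 1 m` preserves the count. -/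
lemma card_reflect (m : ℕ) (p : ℕ → Prop) [DecidablePred p] :
    ((Finset.Icc 1 m).filter (fun i => p (m + 1 - i))).card
      = ((Finset.Icc 1 m).filter p).card := by
  apply Finset.card_nbij' (fun i => m + 1 - i) (fun j => m + 1 - j)
  · intro a ha
    simp only [Finset.mem_coe, Finset.mem_filter, Finset.mem_Icc] at ha ⊢
    exact ⟨⟨by omega, by omega⟩, ha.2⟩
  · intro b hb
    simp only [Finset.mem_coe, Finset.mem_filter, Finset.mem_Icc] at hb ⊢
    have h : m + 1 - (m + 1 - b) = b := by omega
    exact ⟨⟨by omega, by omega⟩, by rw [h]; exact hb.2⟩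
  · intro a ha
    simp only [Finset.mem_coe, Finset.mem_filter, Finset.mem_Icc] at ha
    beta_reduce
    omega
  · intro b hb
    simp only [Finset.mem_coe, Finset.mem_filter, Finset.mem_Icc] at hb
    beta_reduce
    omega

theorem stmt_3 (n : ℕ) (hn : 1 ≤ n) (lam mu : ℕ → ℕ)
    (hlam_anti : ∀ i, 1 ≤ i → lam (i + 1) ≤ lam i)
    (hlam_fin : ∀ i, n < i → lam i = 0)
    (hmu_anti : ∀ i, 1 ≤ i → mu (i + 1) ≤ mu i)
    (hmu_fin : ∀ i, n - 1 < i → mu i = 0)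
    (hsub : ∀ i, 1 ≤ i → mu i ≤ lam i)
    (hhs : IsHorizontalStrip n lam mu)
    (tlam tmu : ℕ → ℕ)
    (htlam : tlam = fun i => if 1 ≤ i ∧ i ≤ n then lam 1 - lam (n + 1 - i) else 0)
    (htmu : tmu = fun i => if 1 ≤ i ∧ i ≤ n - 1 then lam 1 - mu (n - i) else 0) :
    Set.BijOn (fun a => lam 1 - a) (Jset n lam mu) (Jset n tlam tmu) ∧
    ∀ a ∈ Jset n lam mu,
      conjPart n mu a - conjPart n mu (a + 1) =
        conjPart n tmu (lam 1 - a) - conjPart n tmu (lam 1 - a + 1) := by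
  set L := lam 1 with hL
  have hlam_le : ∀ j, 1 ≤ j → lam j ≤ L := anti_le_first lam hlam_anti
  have hmu_le : ∀ j, 1 ≤ j → mu j ≤ L := fun j hj => (hsub j hj).trans (hlam_le j hj)
  have hmun : mu n = 0 := hmu_fin n (by omega)
  -- key equation for tlam
  have keyA : ∀ k, 1 ≤ k → k ≤ L →
      conjPart n tlam k + conjPart n lam (L + 1 - k) = n := by
    intro k hk1 hkL
    have step1 : conjPart n tlam k
        = ((Finset.Icc 1 n).filter (fun j => k ≤ L - lam j)).card := by
      unfold conjPart
      rw [show ((Finset.Icc 1 n).filter (fun i => k ≤ tlam i))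
          = ((Finset.Icc 1 n).filter (fun i => (fun j => k ≤ L - lam j) (n + 1 - i))) from ?_]
      · exact card_reflect n (fun j => k ≤ L - lam j)
      · apply Finset.filter_congr
        intro i hi
        simp only [Finset.mem_Icc] at hi
        rw [htlam]
        simp [hi.1, hi.2]
    have hcompl : ((Finset.Icc 1 n).filter (fun j => k ≤ L - lam j))
        = ((Finset.Icc 1 n).filter (fun j => ¬ (L + 1 - k ≤ lam j))) := by
      apply Finset.filter_congr
      intro j hj
      simp only [Finset.mem_Icc] at hj
      have := hlam_le j hj.1
      omega
    rw [step1, hcompl]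
    unfold conjPart
    rw [Nat.add_comm, Finset.card_filter_add_card_filter_not]
    simp
  -- key equation for tmu
  have keyB : ∀ k, 1 ≤ k → k ≤ L →
      conjPart n tmu k + conjPart n mu (L + 1 - k) = n - 1 := by
    intro k hk1 hkL
    have step0 : conjPart n tmu k
        = ((Finset.Icc 1 (n - 1)).filter
            (fun i => (fun j => k ≤ L - mu j) (n - 1 + 1 - i))).card := by
      unfold conjPart
      congr 1
      ext i
      simp only [Finset.mem_filter, Finset.mem_Icc]
      rw [htmu]
      simp only
      constructor
      · rintro ⟨⟨h1, h2⟩, hk⟩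
        by_cases hle : i ≤ n - 1
        · have he : n - 1 + 1 - i = n - i := by omega
          rw [if_pos ⟨h1, hle⟩] at hk
          exact ⟨⟨h1, hle⟩, by rw [he]; exact hk⟩
        · rw [if_neg (by tauto)] at hk; omega
      · rintro ⟨⟨h1, h2⟩, hk⟩
        have he : n - 1 + 1 - i = n - i := by omega
        rw [he] at hk
        exact ⟨⟨h1, by omega⟩, by rw [if_pos ⟨h1, h2⟩]; exact hk⟩
    have step1 : conjPart n tmu k
        = ((Finset.Icc 1 (n - 1)).filter (fun j => k ≤ L - mu j)).card := by
      rw [step0]; exact card_reflect (n - 1) (fun j => k ≤ L - mu j)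
    have hcompl : ((Finset.Icc 1 (n - 1)).filter (fun j => k ≤ L - mu j))
        = ((Finset.Icc 1 (n - 1)).filter (fun j => ¬ (L + 1 - k ≤ mu j))) := by
      apply Finset.filter_congr
      intro j hj
      simp only [Finset.mem_Icc] at hj
      have := hmu_le j hj.1
      omega
    have hshrink : conjPart n mu (L + 1 - k)
        = ((Finset.Icc 1 (n - 1)).filter (fun j => L + 1 - k ≤ mu j)).card := by
      unfold conjPart
      congr 1
      ext i
      simp only [Finset.mem_filter, Finset.mem_Icc]
      constructor
      · rintro ⟨⟨h1, h2⟩, hk⟩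
        refine ⟨⟨h1, ?_⟩, hk⟩
        by_contra hgt
        have : mu i = 0 := hmu_fin i (by omega)
        omega
      · rintro ⟨⟨h1, h2⟩, hk⟩
        exact ⟨⟨h1, by omega⟩, hk⟩
    rw [step1, hcompl, hshrink]
    rw [Nat.add_comm, Finset.card_filter_add_card_filter_not]
    simp
  -- bounds for J
  have hJ_bd : ∀ a ∈ Jset n lam mu, 1 ≤ a ∧ a + 1 ≤ L := by
    rintro a ⟨ha1, _, hlt⟩
    have hpos : 0 < conjPart n lam (a + 1) := by omega
    obtain ⟨i, hi1, _, hk⟩ := conjPart_pos_exists hpos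
    exact ⟨ha1, hk.trans (hlam_le i hi1)⟩
  have htlam_le : ∀ i, tlam i ≤ L := by
    intro i
    rw [htlam]
    simp only
    split
    · omega
    · omega
  have hJt_bd : ∀ b ∈ Jset n tlam tmu, 1 ≤ b ∧ b + 1 ≤ L := by
    rintro b ⟨hb1, _, hlt⟩
    have hpos : 0 < conjPart n tlam (b + 1) := by omega
    obtain ⟨i, hi1, _, hk⟩ := conjPart_pos_exists hpos
    exact ⟨hb1, hk.trans (htlam_le i)⟩
  -- the central equivalence
  have hmem : ∀ a, 1 ≤ a → a + 1 ≤ L →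
      (a ∈ Jset n lam mu ↔ (L - a) ∈ Jset n tlam tmu) := by
    intro a ha haL
    have hb1 : 1 ≤ L - a := by omega
    have e1 := keyA (L - a) hb1 (by omega)
    have e2 := keyA (L - a + 1) (by omega) (by omega)
    have e3 := keyB (L - a) hb1 (by omega)
    have e4 := keyB (L - a + 1) (by omega) (by omega)
    have h1 : L + 1 - (L - a) = a + 1 := by omega
    have h2 : L + 1 - (L - a + 1) = a := by omega
    rw [h1] at e1 e3
    rw [h2] at e2 e4
    have hs1 := hhs a ha
    have hs2 := hhs (a + 1) (by omega)
    have hm1 := conjPart_mono n mu lam hsub a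
    have hm2 := conjPart_mono n mu lam hsub (a + 1)
    simp only [Jset, Set.mem_setOf_eq]
    constructor
    · rintro ⟨_, hEq, hLt⟩
      exact ⟨hb1, by omega, by omega⟩
    · rintro ⟨_, hEq, hLt⟩
      exact ⟨ha, by omega, by omega⟩
  constructor
  · refine ⟨?_, ?_, ?_⟩
    · intro a ha
      obtain ⟨h1, h2⟩ := hJ_bd a ha
      exact (hmem a h1 h2).mp ha
    · intro a ha a' ha' h
      obtain ⟨h1, h2⟩ := hJ_bd a ha
      obtain ⟨h1', h2'⟩ := hJ_bd a' ha'
      simp only at h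
      omega
    · intro b hb
      obtain ⟨h1, h2⟩ := hJt_bd b hb
      refine ⟨L - b, ?_, by simp only; omega⟩
      have hb' : L - (L - b) = b := by omega
      exact (hmem (L - b) (by omega) (by omega)).mpr (by rwa [hb'])
  · intro a ha
    obtain ⟨h1, h2⟩ := hJ_bd a ha
    have e3 := keyB (L - a) (by omega) (by omega)
    have e4 := keyB (L - a + 1) (by omega) (by omega)
    have hh1 : L + 1 - (L - a) = a + 1 := by omega
    have hh2 : L + 1 - (L - a + 1) = a := by omega
    rw [hh1] at e3
    rw [hh2] at e4
    omega
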